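/- Let 0 < b < L and 0 < A < 1 be real numbers. Define θ : ℝ → ℝ by θ(τ) := −(A/√(1−A²)) · sin(Aτ/b) / (L + b·cos(Aτ/b)). Then θ is differentiable with θ'(τ) = −(A²/(b·√(1−A²))) · (b + L·cos(Aτ/b)) / (L + b·cos(Aτ/b))², and since L > b there exist τ₁ and τ₂ with θ'(τ₁) < 0 and θ'(τ₂) > 0; i.e., the derivative of the expansion changes sign along the congruence. -/

import Mathlib

open Real Set

/-- Section 4.1 of the paper: the expansion `θ(τ)` of the geodesic congruence winding around
the `β` direction of the infinite toroidal tube is differentiable, its derivative is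
`θ'(τ) = −(A²/(b√(1−A²)))·(b + L cos(Aτ/b))/(L + b cos(Aτ/b))²`, and since `L > b` this
derivative changes sign along the congruence. -/
theorem expansion_derivative_changes_sign
    (b L A : ℝ) (hb : 0 < b) (hbL : b < L) (hA0 : 0 < A) (hA1 : A < 1) :
    (∀ τ : ℝ,
      HasDerivAt
        (fun τ : ℝ => -(A / Real.sqrt (1 - A ^ 2)) * Real.sin (A * τ / b)
          / (L + b * Real.cos (A * τ / b)))
        (-(A ^ 2 / (b * Real.sqrt (1 - A ^ 2))) * (b + L * Real.cos (A * τ / b))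
          / (L + b * Real.cos (A * τ / b)) ^ 2) τ) ∧
    (∃ τ₁ τ₂ : ℝ,
      -(A ^ 2 / (b * Real.sqrt (1 - A ^ 2))) * (b + L * Real.cos (A * τ₁ / b))
          / (L + b * Real.cos (A * τ₁ / b)) ^ 2 < 0 ∧
      0 < -(A ^ 2 / (b * Real.sqrt (1 - A ^ 2))) * (b + L * Real.cos (A * τ₂ / b))
          / (L + b * Real.cos (A * τ₂ / b)) ^ 2) := by
  have hs : 0 < Real.sqrt (1 - A ^ 2) := by
    apply Real.sqrt_pos.mpr; nlinarith
  have hden : ∀ τ : ℝ, 0 < L + b * Real.cos (A * τ / b) := by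
    intro τ
    have := Real.neg_one_le_cos (A * τ / b)
    nlinarith
  constructor
  · intro τ
    have h1 : HasDerivAt (fun τ : ℝ => A * τ / b) (A / b) τ := by
      simpa using ((hasDerivAt_id τ).const_mul A).div_const b
    have hnum : HasDerivAt (fun τ : ℝ => -(A / Real.sqrt (1 - A ^ 2)) * Real.sin (A * τ / b))
        (-(A / Real.sqrt (1 - A ^ 2)) * (Real.cos (A * τ / b) * (A / b))) τ :=
      (h1.sin).const_mul _
    have hden' : HasDerivAt (fun τ : ℝ => L + b * Real.cos (A * τ / b))
        (0 + b * (-Real.sin (A * τ / b) * (A / b))) τ :=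
      (hasDerivAt_const τ L).add ((h1.cos).const_mul b)
    have := hnum.div hden' (ne_of_gt (hden τ))
    refine this.congr_deriv (Eq.symm ?_)
    have hc : Real.sin (A * τ / b) ^ 2 = 1 - Real.cos (A * τ / b) ^ 2 := by
      have := Real.sin_sq_add_cos_sq (A * τ / b); linarith
    congr 1
    field_simp
    linear_combination (A * b) * hc
  · refine ⟨0, Real.pi * b / A, ?_, ?_⟩
    · have h0 : A * 0 / b = 0 := by ring
      rw [h0, Real.cos_zero]
      apply div_neg_of_neg_of_pos
      · have : 0 < A ^ 2 / (b * Real.sqrt (1 - A ^ 2)) := by positivity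
        nlinarith
      · nlinarith [hden 0]
    · have h0 : A * (Real.pi * b / A) / b = Real.pi := by
        field_simp
      rw [h0, Real.cos_pi]
      apply div_pos
      · have : 0 < A ^ 2 / (b * Real.sqrt (1 - A ^ 2)) := by positivity
        nlinarith
      · nlinarith [hden 0, Real.cos_zero]
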